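/- Let R = ∏_{λ∈Λ} F_λ be a product of fields over an infinite index set Λ. Then there exists a maximal ideal P of R containing the ideal ⊕_{λ∈Λ} F_λ, and any such P is not a direct sum of principal ideals of R. -/

import Mathlib

open scoped Classical

set_option linter.unusedSectionVars false

private def finSuppIdeal {Λ : Type} (F : Λ → Type) [∀ l, Field (F l)] :
    Ideal (∀ l, F l) where
  carrier := {a | {l | a l ≠ 0}.Finite}
  zero_mem' := by simp
  add_mem' := by
    intro a b ha hb
    refine Set.Finite.subset (ha.union hb) ?_
    intro l hl
    simp only [Set.mem_setOf_eq, Set.mem_union] at *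
    by_contra h
    push_neg at h
    simp [h.1, h.2] at hl
  smul_mem' := by
    intro c a ha
    refine Set.Finite.subset ha ?_
    intro l hl
    simp only [Set.mem_setOf_eq] at *
    intro h
    simp [h] at hl

private theorem exists_maximal {Λ : Type} [Infinite Λ] (F : Λ → Type)
    [∀ l, Field (F l)] :
    ∃ P : Ideal (∀ l, F l), P.IsMaximal ∧
        ∀ a : ∀ l, F l, {l | a l ≠ 0}.Finite → a ∈ P := by
  obtain ⟨P, hP, hle⟩ := Ideal.exists_le_maximal (finSuppIdeal F) (by
    intro h
    have h1 : (1 : ∀ l, F l) ∈ finSuppIdeal F := h ▸ Submodule.mem_top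
    have hfin : {l | (1 : ∀ l, F l) l ≠ 0}.Finite := h1
    simp only [Pi.one_apply] at hfin
    have : (Set.univ : Set Λ).Finite := by
      convert hfin using 1; ext l; simp
    exact Set.infinite_univ this)
  exact ⟨P, hP, fun a ha => hle ha⟩

/-- An ideal `P` of a commutative ring `R` is an internal direct sum of cyclic
`R`-modules: there is a family of elements of `P` whose cyclic spans are
independent and whose supremum is `P`. -/
def IsDirectSumOfCyclics {R : Type} [CommRing R] (P : Ideal R) : Prop :=
  ∃ (ι : Type) (w : ι → R), (∀ i, w i ∈ P) ∧
    iSupIndep (fun i => Ideal.span {w i}) ∧ (⨆ i, Ideal.span {w i}) = P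

section
variable {Λ : Type} [Infinite Λ] (F : Λ → Type) [∀ l, Field (F l)]

theorem main_part (P : Ideal (∀ l, F l)) (hmax : P.IsMaximal)
    (hfin : ∀ a : ∀ l, F l, {l | a l ≠ 0}.Finite → a ∈ P) :
    ¬ IsDirectSumOfCyclics P := by
  rintro ⟨ι, w, hwP, hindep, hsup⟩
  set e : ι → ∀ l, F l := fun i l => if w i l = 0 then 0 else 1 with he_def
  have he0 : ∀ i l, w i l = 0 → e i l = 0 := by intro i l h; simp [he_def, h]
  have he1 : ∀ i l, w i l ≠ 0 → e i l = 1 := by intro i l h; simp [he_def, h]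
  have hval : ∀ i l, e i l = 0 ∨ e i l = 1 := by
    intro i l
    by_cases h : w i l = 0
    · exact Or.inl (he0 i l h)
    · exact Or.inr (he1 i l h)
  -- spans coincide
  have hspan : ∀ i, Ideal.span {w i} = Ideal.span {e i} := by
    intro i
    apply le_antisymm <;> rw [Ideal.span_singleton_le_span_singleton]
    · exact ⟨fun l => w i l, by
        funext l; by_cases h : w i l = 0 <;> simp [he_def, h]⟩
    · exact ⟨fun l => (w i l)⁻¹, by
        funext l; by_cases h : w i l = 0 <;> simp [he_def, h]⟩
  have hfe : (fun i => Ideal.span {w i}) = fun i => Ideal.span {e i} :=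
    funext hspan
  rw [hfe] at hindep hsup
  -- membership via finsupp sums
  have hmemP : ∀ x : (∀ l, F l), x ∈ P →
      ∃ c : ι →₀ (∀ l, F l), (c.sum fun i a => a • e i) = x := by
    intro x hx
    rw [← hsup, show (⨆ i, Ideal.span {e i}) = Ideal.span (Set.range e) by
      rw [← Set.iUnion_singleton_eq_range, Ideal.span, Submodule.span_iUnion]]
      at hx
    exact Finsupp.mem_span_range_iff_exists_finsupp.mp hx
  have heP : ∀ i, e i ∈ P := by
    intro i
    rw [← hsup]
    exact Submodule.mem_iSup_of_mem i (Ideal.subset_span rfl)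
  -- orthogonality
  have horth : ∀ i j, i ≠ j → e i * e j = 0 := by
    intro i j hij
    have h1 : e i * e j ∈ Ideal.span {e i} :=
      Ideal.mem_span_singleton.mpr ⟨e j, rfl⟩
    have h2 : e i * e j ∈ ⨆ k, ⨆ _ : k ≠ i, Ideal.span {e k} :=
      Submodule.mem_iSup_of_mem j (Submodule.mem_iSup_of_mem (Ne.symm hij)
        (Ideal.mem_span_singleton.mpr ⟨e i, mul_comm _ _⟩))
    exact Submodule.disjoint_def.mp (hindep i) _ h1 h2
  have horthl : ∀ i j (l : Λ), i ≠ j → e i l = 0 ∨ e j l = 0 := by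
    intro i j l hij
    have := congrFun (horth i j hij) l
    exact mul_eq_zero.mp (by simpa using this)
  -- coverage
  have hcov : ∀ l : Λ, ∃ i, e i l = 1 := by
    intro l
    have hδ : Pi.single l (1 : F l) ∈ P := by
      refine hfin _ (Set.Finite.subset (Set.finite_singleton l) ?_)
      intro l' h
      by_contra hne
      simp only [Set.mem_singleton_iff] at hne
      exact h (Pi.single_eq_of_ne hne 1)
    obtain ⟨c, hc⟩ := hmemP _ hδ
    by_contra hno
    push_neg at hno
    have hze : ∀ i, e i l = 0 := by
      intro i
      rcases hval i l with h | h
      · exact h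
      · exact absurd h (hno i)
    have h1 := congrFun hc l
    rw [Finsupp.sum, Finset.sum_apply] at h1
    simp [hze, Pi.single_eq_same] at h1
  -- key vanishing lemma
  have key : ∀ y : (∀ l, F l), y ∈ P → ∃ s : Finset ι,
      ∀ (m : ι) (l : Λ), m ∉ s → e m l = 1 → y l = 0 := by
    intro y hy
    obtain ⟨c, hc⟩ := hmemP y hy
    refine ⟨c.support, fun m l hm hml => ?_⟩
    rw [← hc, Finsupp.sum, Finset.sum_apply]
    apply Finset.sum_eq_zero
    intro i hi
    have hne : i ≠ m := fun h => hm (h ▸ hi)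
    rcases horthl i m l hne with h | h
    · simp [h]
    · rw [hml] at h; exact absurd h one_ne_zero
  by_cases hS : {i | e i ≠ 0}.Finite
  · -- finitely many nonzero idempotents : 1 ∈ P
    have h1P : (1 : ∀ l, F l) ∈ P := by
      have : (1 : ∀ l, F l) = ∑ i ∈ hS.toFinset, e i := by
        funext l
        obtain ⟨i0, hi0⟩ := hcov l
        have hi0m : i0 ∈ hS.toFinset := by
          simp only [Set.Finite.mem_toFinset, Set.mem_setOf_eq]
          intro h
          rw [h] at hi0
          have : (0 : ∀ l, F l) l = 1 := h ▸ hi0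
          simp at this
        rw [Finset.sum_apply]
        rw [Finset.sum_eq_single_of_mem i0 hi0m]
        · exact hi0.symm ▸ rfl
        · intro j _ hj
          rcases horthl j i0 l hj with h | h
          · exact h
          · rw [hi0] at h; exact absurd h one_ne_zero
      rw [this]
      exact Ideal.sum_mem _ fun i _ => heP i
    exact hmax.ne_top (Ideal.eq_top_iff_one P |>.mpr h1P)
  · -- infinitely many nonzero idempotents
    replace hS : {i | e i ≠ 0}.Infinite := hS
    obtain ⟨g, hg⟩ : ∃ g : ℕ → ι, Function.Injective g ∧ ∀ n, e (g n) ≠ 0 := by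
      obtain f := hS.natEmbedding
      exact ⟨fun n => (f n).1, fun a b h => by
        simpa using f.injective (Subtype.ext h), fun n => (f n).2⟩
    obtain ⟨hginj, hgne⟩ := hg
    -- choose witnesses
    have hwit : ∀ n, ∃ l, e (g n) l = 1 := by
      intro n
      obtain ⟨l, hl⟩ := Function.ne_iff.mp (hgne n)
      rcases hval (g n) l with h | h
      · exact absurd h hl
      · exact ⟨l, h⟩
    choose L hL using hwit
    set x : ∀ l, F l := fun l => if ∃ n, e (g (2 * n)) l = 1 then 1 else 0 with hx_def
    have hx01 : ∀ l, (∃ n, e (g (2 * n)) l = 1) → x l = 1 := by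
      intro l h; simp [hx_def, h]
    have hx00 : ∀ l, (¬ ∃ n, e (g (2 * n)) l = 1) → x l = 0 := by
      intro l h; simp [hx_def, h]
    have hxmul : x * (1 - x) = 0 := by
      funext l
      by_cases h : ∃ n, e (g (2 * n)) l = 1
      · simp [hx01 l h]
      · simp [hx00 l h]
    have hPprime : P.IsPrime := hmax.isPrime
    rcases hPprime.mem_or_mem (show x * (1 - x) ∈ P by rw [hxmul]; exact P.zero_mem)
      with hxP | hxP
    · -- x ∈ P : contradiction with even blocks
      obtain ⟨s, hs⟩ := key x hxP
      obtain ⟨n, hn⟩ : ∃ n, g (2 * n) ∉ s := by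
        by_contra h
        push_neg at h
        have : Set.MapsTo (fun n => g (2 * n)) Set.univ s := fun n _ => h n
        have hinj : Set.InjOn (fun n => g (2 * n)) Set.univ := fun a _ b _ hab => by
          have := hginj hab
          omega
        exact Set.infinite_univ (Set.Finite.of_finite_image
          (s.finite_toSet.subset (Set.image_subset_iff.mpr this)) hinj)
      have h0 := hs (g (2 * n)) (L (2 * n)) hn (hL (2 * n))
      have h1 : x (L (2 * n)) = 1 := hx01 _ ⟨n, hL (2 * n)⟩
      rw [h0] at h1
      exact one_ne_zero h1.symm
    · -- 1 - x ∈ P : contradiction with odd blocks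
      obtain ⟨s, hs⟩ := key _ hxP
      obtain ⟨n, hn⟩ : ∃ n, g (2 * n + 1) ∉ s := by
        by_contra h
        push_neg at h
        have : Set.MapsTo (fun n => g (2 * n + 1)) Set.univ s := fun n _ => h n
        have hinj : Set.InjOn (fun n => g (2 * n + 1)) Set.univ := fun a _ b _ hab => by
          have := hginj hab
          omega
        exact Set.infinite_univ (Set.Finite.of_finite_image
          (s.finite_toSet.subset (Set.image_subset_iff.mpr this)) hinj)
      have h0 := hs (g (2 * n + 1)) (L (2 * n + 1)) hn (hL (2 * n + 1))
      have hxzero : x (L (2 * n + 1)) = 0 := by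
        apply hx00
        rintro ⟨m, hm⟩
        have hne : g (2 * m) ≠ g (2 * n + 1) := fun h => by
          have := hginj h; omega
        rcases horthl (g (2 * m)) (g (2 * n + 1)) (L (2 * n + 1)) hne with h | h
        · rw [hm] at h; exact one_ne_zero h
        · rw [hL (2 * n + 1)] at h; exact one_ne_zero h
      have : (1 - x) (L (2 * n + 1)) = 1 := by simp [hxzero]
      rw [h0] at this
      exact one_ne_zero this.symm
end

theorem product_of_fields_maximal_not_direct_sum
    {Λ : Type} [Infinite Λ] (F : Λ → Type) [∀ l, Field (F l)] :
    (∃ P : Ideal (∀ l, F l), P.IsMaximal ∧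
        ∀ a : ∀ l, F l, {l | a l ≠ 0}.Finite → a ∈ P) ∧
    (∀ P : Ideal (∀ l, F l), P.IsMaximal →
        (∀ a : ∀ l, F l, {l | a l ≠ 0}.Finite → a ∈ P) →
        ¬ IsDirectSumOfCyclics P) := by
  exact ⟨exists_maximal F, fun P hmax hfin => main_part F P hmax hfin⟩
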